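/- Let X, Y ∈ M_d(ℂ) and define ψ_X(Y) := ∫₀¹ ∫₀ˢ e^{-sX} Y e^{(s-r)X} Y e^{rX} dr ds. Then e^X · ψ_X(Y) = ∑_{k,j,l ≥ 0} X^k Y X^j Y X^l / (k+j+l+2)!. -/

import Mathlib

open scoped Matrix
open NormedSpace intervalIntegral

attribute [local instance] Matrix.linftyOpNormedRing Matrix.linftyOpNormedAlgebra

lemma beta_nat (b : ℕ) : ∀ a : ℕ, ∫ x in (0:ℝ)..1, x ^ a * (1 - x) ^ b
    = (Nat.factorial a * Nat.factorial b : ℝ) / Nat.factorial (a + b + 1) := by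
  induction b with
  | zero =>
    intro a
    simp [integral_pow, Nat.factorial_succ]
    rw [eq_div_iff (by positivity), inv_mul_eq_div, div_eq_iff (by positivity)]
    push_cast; ring
  | succ b ih =>
    intro a
    have hder : ∀ x : ℝ, HasDerivAt (fun x : ℝ => x ^ (a+1) * (1-x) ^ (b+1))
        ((a+1) * x ^ a * (1-x)^(b+1) - (b+1) * (x ^ (a+1) * (1-x)^b)) x := by
      intro x
      have h1 : HasDerivAt (fun x : ℝ => x ^ (a+1)) ((a+1) * x ^ a) x := by
        simpa using hasDerivAt_pow (a+1) x
      have h2 : HasDerivAt (fun x : ℝ => (1-x) ^ (b+1)) (-((b+1) * (1-x)^b)) x := by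
        have h3 : HasDerivAt (fun x : ℝ => 1 - x) (-1) x := by
          simpa using (hasDerivAt_id x).const_sub 1
        have := (hasDerivAt_pow (b+1) (1-x)).comp x h3
        simpa [Function.comp_def, mul_comm, mul_assoc] using this
      simpa [mul_comm, mul_assoc, mul_left_comm] using (h1.fun_mul h2).congr_deriv (by push_cast; ring)
    have h0 : ∫ x in (0:ℝ)..1, ((a+1) * x ^ a * (1-x)^(b+1) - (b+1) * (x ^ (a+1) * (1-x)^b)) = 0 := by
      rw [integral_eq_sub_of_hasDerivAt (fun x _ => hder x)
        (by apply Continuous.intervalIntegrable; continuity)]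
      norm_num
    rw [intervalIntegral.integral_sub (by apply Continuous.intervalIntegrable; continuity)
      (by apply Continuous.intervalIntegrable; continuity)] at h0
    simp only [mul_assoc, intervalIntegral.integral_const_mul] at h0
    have key : ((a:ℝ)+1) * ∫ x in (0:ℝ)..1, x ^ a * (1-x)^(b+1)
        = ((b:ℝ)+1) * ∫ x in (0:ℝ)..1, x ^ (a+1) * (1-x)^b := by linarith [h0]
    rw [ih (a+1)] at key
    have h2 : ((a:ℝ)+1) ≠ 0 := by positivity
    have key3 : ∫ x in (0:ℝ)..1, x ^ a * (1-x)^(b+1)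
        = ((b:ℝ)+1) * ((Nat.factorial (a+1) * Nat.factorial b : ℝ) / Nat.factorial (a+1+b+1)) / ((a:ℝ)+1) := by
      rw [eq_div_iff h2]; linarith [key]
    rw [show a + (b+1) + 1 = a + 1 + b + 1 from by omega, key3]
    have h3 : (Nat.factorial (a+1+b+1) : ℝ) ≠ 0 := by positivity
    field_simp
    push_cast [Nat.factorial_succ]
    ring

lemma beta_scaled (a b : ℕ) (s : ℝ) : ∫ r in (0:ℝ)..s, r ^ a * (s - r) ^ b
    = s ^ (a + b + 1) * ((Nat.factorial a * Nat.factorial b : ℝ) / Nat.factorial (a + b + 1)) := by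
  rcases eq_or_ne s 0 with hs | hs
  · simp [hs]
  · have key := intervalIntegral.integral_comp_div (a := (0:ℝ)) (b := s) (c := s)
      (f := fun u => s ^ (a+b) * (u ^ a * (1 - u) ^ b)) hs
    rw [zero_div, div_self hs] at key
    have congr1 : ∀ r : ℝ, s ^ (a+b) * ((r/s) ^ a * (1 - r/s) ^ b) = r ^ a * (s - r) ^ b := by
      intro r
      have h1 : (1 - r/s) = (s - r)/s := by field_simp
      rw [h1, div_pow, div_pow, pow_add]
      field_simp
    calc ∫ r in (0:ℝ)..s, r ^ a * (s - r) ^ b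
        = ∫ r in (0:ℝ)..s, s ^ (a+b) * ((r/s) ^ a * (1 - r/s) ^ b) := by
          apply intervalIntegral.integral_congr; intro r _; exact (congr1 r).symm
      _ = s • ∫ u in (0:ℝ)..1, s ^ (a+b) * (u ^ a * (1 - u) ^ b) := key
      _ = s ^ (a + b + 1) * ((Nat.factorial a * Nat.factorial b : ℝ) / Nat.factorial (a + b + 1)) := by
          rw [intervalIntegral.integral_const_mul, beta_nat b a, smul_eq_mul, pow_succ]
          ring

lemma tsum_triple_mul {R : Type*} [NormedRing R] [CompleteSpace R]
    (f g h : ℕ → R) (hf : Summable fun n => ‖f n‖) (hg : Summable fun n => ‖g n‖)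
    (hh : Summable fun n => ‖h n‖) :
    (∑' n, f n) * (∑' n, g n) * (∑' n, h n)
      = ∑' p : ℕ × ℕ × ℕ, f p.1 * g p.2.1 * h p.2.2 := by
  rw [tsum_mul_tsum_of_summable_norm hf hg,
    tsum_mul_tsum_of_summable_norm (hf.mul_norm hg) hh]
  exact ((Equiv.prodAssoc ℕ ℕ ℕ).tsum_eq
    (fun p : ℕ × ℕ × ℕ => f p.1 * g p.2.1 * h p.2.2))

section Aux

variable {d : ℕ} (X Y : Matrix (Fin d) (Fin d) ℂ)

lemma expand_aux (s r : ℝ) :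
    exp ((1-s) • X) * Y * exp ((s-r) • X) * Y * exp (r • X)
      = ∑' p : ℕ × ℕ × ℕ, ((1-s)^p.1 * (s-r)^p.2.1 * r^p.2.2 : ℝ) •
          ((Nat.factorial p.1 * Nat.factorial p.2.1 * Nat.factorial p.2.2 : ℂ)⁻¹ •
            (X^p.1 * Y * X^p.2.1 * Y * X^p.2.2)) := by
  have hsumN : ∀ t : ℝ, Summable fun n => ‖(Nat.factorial n : ℂ)⁻¹ • (t • X) ^ n‖ :=
    fun t => NormedSpace.norm_expSeries_summable' (𝕂 := ℂ) (t • X)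
  have hexp : ∀ t : ℝ, exp (t • X) = ∑' n : ℕ, (Nat.factorial n : ℂ)⁻¹ • (t • X) ^ n :=
    fun t => by rw [exp_eq_tsum (𝕂 := ℂ)]
  have hmulY : ∀ t : ℝ, exp (t • X) * Y
      = ∑' n : ℕ, ((Nat.factorial n : ℂ)⁻¹ • (t • X) ^ n) * Y := fun t => by
    rw [hexp]
    exact (((hsumN t).of_norm).hasSum.mul_right Y).tsum_eq.symm
  have hsumY : ∀ t : ℝ, Summable fun n => ‖((Nat.factorial n : ℂ)⁻¹ • (t • X) ^ n) * Y‖ :=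
    fun t => Summable.of_nonneg_of_le (fun n => norm_nonneg _)
      (fun n => norm_mul_le _ _) ((hsumN t).mul_right ‖Y‖)
  rw [mul_assoc (exp ((1-s) • X) * Y) (exp ((s-r) • X)) Y,
    hmulY (1-s), hmulY (s-r), hexp r]
  refine (tsum_triple_mul _ _ _ (hsumY _) (hsumY _) (hsumN _)).trans ?_
  refine tsum_congr fun p => ?_
  obtain ⟨k, j, l⟩ := p
  simp only [smul_pow, smul_mul_assoc, mul_smul_comm, smul_smul, ← Complex.coe_smul]
  congr 1
  push_cast
  ring
  rw [← mul_assoc (X ^ k * Y) (X ^ j) Y]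

lemma swap_tsum_integral (M : ℕ × ℕ × ℕ → Matrix (Fin d) (Fin d) ℂ)
    (hM : Summable fun p => ‖M p‖) (φ : ℕ × ℕ × ℕ → ℝ → ℝ)
    (hφc : ∀ p, Continuous (φ p)) (a b : ℝ)
    (hφb : ∀ p, ∀ x ∈ Set.uIcc a b, |φ p x| ≤ 1) :
    (∫ x in a..b, ∑' p, φ p x • M p) = ∑' p, (∫ x in a..b, φ p x) • M p := by
  set F : ℕ × ℕ × ℕ → C(ℝ, Matrix (Fin d) (Fin d) ℂ) :=
    fun p => ⟨fun x => φ p x • M p, (hφc p).smul continuous_const⟩ with hF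
  have hsum : Summable fun p =>
      @Norm.norm _ ContinuousMap.instNorm ((F p).restrict (⟨Set.uIcc a b, isCompact_uIcc⟩ : TopologicalSpace.Compacts ℝ)) := by
    refine Summable.of_nonneg_of_le (fun p => norm_nonneg _) (fun p => ?_) hM
    refine (ContinuousMap.norm_le _ (norm_nonneg (M p))).2 fun x => ?_
    change ‖F p x.1‖ ≤ ‖M p‖
    simp only [hF, ContinuousMap.coe_mk]
    rw [norm_smul, Real.norm_eq_abs]
    calc |φ p x.1| * ‖M p‖ ≤ 1 * ‖M p‖ := by
          gcongr; exact hφb p x.1 x.2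
      _ = ‖M p‖ := one_mul _
  calc (∫ x in a..b, ∑' p, φ p x • M p) = ∫ x in a..b, ∑' p, F p x := rfl
    _ = ∑' p, ∫ x in a..b, F p x := (tsum_intervalIntegral_eq_of_summable_norm hsum).symm
    _ = ∑' p, (∫ x in a..b, φ p x) • M p := by
        refine tsum_congr fun p => ?_
        simp only [hF, ContinuousMap.coe_mk]
        exact intervalIntegral.integral_smul_const (φ p) (M p)

end Aux

set_option maxHeartbeats 2000000

/-- For `X Y : M_d(ℂ)` and
`ψ_X(Y) := ∫₀¹ ∫₀ˢ e^{-sX} Y e^{(s-r)X} Y e^{rX} dr ds`, one has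
`e^X * ψ_X(Y) = ∑_{k,j,l ≥ 0} X^k Y X^j Y X^l / (k+j+l+2)!`. -/
theorem exp_mul_psi_eq_tsum {d : ℕ} (X Y : Matrix (Fin d) (Fin d) ℂ) :
    exp X *
        (∫ s in (0:ℝ)..1, ∫ r in (0:ℝ)..s,
          exp ((-s : ℝ) • X) * Y * exp (((s - r : ℝ)) • X) * Y * exp ((r : ℝ) • X)) =
      ∑' p : ℕ × ℕ × ℕ,
        ((Nat.factorial (p.1 + p.2.1 + p.2.2 + 2) : ℂ)⁻¹) •
          (X ^ p.1 * Y * X ^ p.2.1 * Y * X ^ p.2.2) := by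
  -- norm summability of the building blocks
  have he : Summable fun n : ℕ => (Nat.factorial n : ℝ)⁻¹ * ‖X ^ n‖ := by
    have h := NormedSpace.norm_expSeries_summable' (𝕂 := ℂ) X
    refine h.congr fun n => ?_
    rw [norm_smul]
    norm_num
  have hD : Summable fun p : ℕ × ℕ × ℕ =>
      ((Nat.factorial p.1 : ℝ)⁻¹ * ‖X ^ p.1‖ * ‖Y‖) *
        (((Nat.factorial p.2.1 : ℝ)⁻¹ * ‖X ^ p.2.1‖ * ‖Y‖) *
          ((Nat.factorial p.2.2 : ℝ)⁻¹ * ‖X ^ p.2.2‖)) := by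
    refine Summable.mul_of_nonneg (he.mul_right ‖Y‖)
      (Summable.mul_of_nonneg (he.mul_right ‖Y‖) he ?_ ?_) ?_ ?_ <;>
      intro n <;> positivity
  have hM : Summable fun p : ℕ × ℕ × ℕ =>
      ‖(Nat.factorial p.1 * Nat.factorial p.2.1 * Nat.factorial p.2.2 : ℂ)⁻¹ •
        (X ^ p.1 * Y * X ^ p.2.1 * Y * X ^ p.2.2)‖ := by
    refine Summable.of_nonneg_of_le (fun p => norm_nonneg _) (fun p => ?_) hD
    obtain ⟨k, j, l⟩ := p
    have h5 : ‖X^k * Y * X^j * Y * X^l‖ ≤ ‖X^k‖ * ‖Y‖ * ‖X^j‖ * ‖Y‖ * ‖X^l‖ := by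
      calc ‖X^k * Y * X^j * Y * X^l‖ ≤ ‖X^k * Y * X^j * Y‖ * ‖X^l‖ := norm_mul_le _ _
        _ ≤ (‖X^k * Y * X^j‖ * ‖Y‖) * ‖X^l‖ := by gcongr; exact norm_mul_le _ _
        _ ≤ ((‖X^k * Y‖ * ‖X^j‖) * ‖Y‖) * ‖X^l‖ := by gcongr; exact norm_mul_le _ _
        _ ≤ (((‖X^k‖ * ‖Y‖) * ‖X^j‖) * ‖Y‖) * ‖X^l‖ := by gcongr; exact norm_mul_le _ _
    rw [norm_smul]
    have hnorm : ‖(Nat.factorial k * Nat.factorial j * Nat.factorial l : ℂ)⁻¹‖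
        = (Nat.factorial k : ℝ)⁻¹ * (Nat.factorial j : ℝ)⁻¹ * (Nat.factorial l : ℝ)⁻¹ := by
      rw [norm_inv, norm_mul, norm_mul]
      push_cast
      rw [mul_inv, mul_inv]
      norm_num
    rw [hnorm]
    calc (Nat.factorial k : ℝ)⁻¹ * (Nat.factorial j : ℝ)⁻¹ * (Nat.factorial l : ℝ)⁻¹ *
          ‖X^k * Y * X^j * Y * X^l‖
        ≤ (Nat.factorial k : ℝ)⁻¹ * (Nat.factorial j : ℝ)⁻¹ * (Nat.factorial l : ℝ)⁻¹ *
          (‖X^k‖ * ‖Y‖ * ‖X^j‖ * ‖Y‖ * ‖X^l‖) := by gcongr <;> positivity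
      _ = ((Nat.factorial k : ℝ)⁻¹ * ‖X ^ k‖ * ‖Y‖) *
            (((Nat.factorial j : ℝ)⁻¹ * ‖X ^ j‖ * ‖Y‖) *
              ((Nat.factorial l : ℝ)⁻¹ * ‖X ^ l‖)) := by ring
  -- powers of small reals are small
  have habs1 : ∀ x : ℝ, |x| ≤ 1 → ∀ n : ℕ, |x ^ n| ≤ 1 := fun x hx n => by
    rw [abs_pow]; exact pow_le_one₀ (abs_nonneg x) hx
  -- continuity of the integrand
  have hce : ∀ {α : Type} [TopologicalSpace α] (u : α → ℝ), Continuous u →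
      Continuous fun t => exp (u t • X) := fun u hu =>
    exp_continuous.comp (hu.smul continuous_const)
  have hcont : Continuous (Function.uncurry fun s r : ℝ =>
      exp ((-s) • X) * Y * exp ((s - r) • X) * Y * exp (r • X)) := by
    apply Continuous.mul
    apply Continuous.mul
    apply Continuous.mul
    apply Continuous.mul
    · exact hce _ continuous_fst.neg
    · exact continuous_const
    · exact hce _ (continuous_fst.sub continuous_snd)
    · exact continuous_const
    · exact hce _ continuous_snd
  have hFc : Continuous fun s : ℝ => ∫ r in (0:ℝ)..s,
      exp ((-s) • X) * Y * exp ((s - r) • X) * Y * exp (r • X) :=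
    intervalIntegral.continuous_parametric_intervalIntegral_of_continuous hcont continuous_id
  have step1 : exp X * (∫ s in (0:ℝ)..1, ∫ r in (0:ℝ)..s,
        exp ((-s) • X) * Y * exp ((s - r) • X) * Y * exp (r • X))
      = ∫ s in (0:ℝ)..1, exp X * ∫ r in (0:ℝ)..s,
        exp ((-s) • X) * Y * exp ((s - r) • X) * Y * exp (r • X) :=
    ((ContinuousLinearMap.mul ℂ _ (exp X)).intervalIntegral_comp_comm
      (hFc.intervalIntegrable 0 1)).symm
  rw [step1]
  have hmain : Set.EqOn
      (fun s : ℝ => exp X * ∫ r in (0:ℝ)..s,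
        exp ((-s) • X) * Y * exp ((s - r) • X) * Y * exp (r • X))
      (fun s : ℝ => ∑' p : ℕ × ℕ × ℕ,
        ((1-s)^p.1 * (s^(p.2.2 + p.2.1 + 1) *
          ((Nat.factorial p.2.2 * Nat.factorial p.2.1 : ℝ) / Nat.factorial (p.2.2 + p.2.1 + 1)))) •
          ((Nat.factorial p.1 * Nat.factorial p.2.1 * Nat.factorial p.2.2 : ℂ)⁻¹ •
            (X ^ p.1 * Y * X ^ p.2.1 * Y * X ^ p.2.2)))
      (Set.uIcc 0 1) := by
    intro s hs
    rw [Set.uIcc_of_le zero_le_one] at hs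
    obtain ⟨hs0, hs1⟩ := hs
    have hcont_r : Continuous fun r : ℝ =>
        exp ((-s) • X) * Y * exp ((s - r) • X) * Y * exp (r • X) := by
      apply Continuous.mul
      apply Continuous.mul
      apply Continuous.mul
      apply Continuous.mul
      · exact continuous_const
      · exact continuous_const
      · exact hce _ (continuous_const.sub continuous_id)
      · exact continuous_const
      · exact hce _ continuous_id
    have pull2 : exp X * (∫ r in (0:ℝ)..s,
          exp ((-s) • X) * Y * exp ((s - r) • X) * Y * exp (r • X))
        = ∫ r in (0:ℝ)..s, exp X *
          (exp ((-s) • X) * Y * exp ((s - r) • X) * Y * exp (r • X)) :=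
      ((ContinuousLinearMap.mul ℂ _ (exp X)).intervalIntegral_comp_comm
        (hcont_r.intervalIntegrable 0 s)).symm
    have hcomb : ∀ r : ℝ, exp X *
        (exp ((-s) • X) * Y * exp ((s - r) • X) * Y * exp (r • X))
        = exp ((1-s) • X) * Y * exp ((s - r) • X) * Y * exp (r • X) := by
      intro r
      have h1 : exp X * exp ((-s) • X) = exp ((1-s) • X) := by
        rw [show ((1-s) : ℝ) • X = X + (-s) • X by module]
        exact (exp_add_of_commute ((Commute.refl X).smul_right (-s))).symm
      simp only [← mul_assoc]
      rw [h1]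
    show exp X * ∫ r in (0:ℝ)..s, _ = _
    calc exp X * (∫ r in (0:ℝ)..s,
          exp ((-s) • X) * Y * exp ((s - r) • X) * Y * exp (r • X))
        = ∫ r in (0:ℝ)..s, exp X *
          (exp ((-s) • X) * Y * exp ((s - r) • X) * Y * exp (r • X)) := pull2
      _ = ∫ r in (0:ℝ)..s, ∑' p : ℕ × ℕ × ℕ,
          ((1-s)^p.1 * (s-r)^p.2.1 * r^p.2.2 : ℝ) •
            ((Nat.factorial p.1 * Nat.factorial p.2.1 * Nat.factorial p.2.2 : ℂ)⁻¹ •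
              (X ^ p.1 * Y * X ^ p.2.1 * Y * X ^ p.2.2)) := by
          refine intervalIntegral.integral_congr fun r _ => ?_
          rw [hcomb r, expand_aux X Y s r]
      _ = ∑' p : ℕ × ℕ × ℕ,
          (∫ r in (0:ℝ)..s, ((1-s)^p.1 * (s-r)^p.2.1 * r^p.2.2 : ℝ)) •
            ((Nat.factorial p.1 * Nat.factorial p.2.1 * Nat.factorial p.2.2 : ℂ)⁻¹ •
              (X ^ p.1 * Y * X ^ p.2.1 * Y * X ^ p.2.2)) := by
          refine swap_tsum_integral _ hM _ (fun p => by fun_prop) 0 s fun p x hx => ?_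
          rw [Set.uIcc_of_le hs0] at hx
          obtain ⟨hx0, hxs⟩ := hx
          rw [abs_mul, abs_mul]
          have b1 : |1 - s| ≤ 1 := abs_le.2 ⟨by linarith, by linarith⟩
          have b2 : |s - x| ≤ 1 := abs_le.2 ⟨by linarith, by linarith⟩
          have b3 : |x| ≤ 1 := abs_le.2 ⟨by linarith, by linarith⟩
          have := habs1 _ b1 p.1
          have := habs1 _ b2 p.2.1
          have := habs1 _ b3 p.2.2
          have hb : |(1-s)^p.1| * |(s-x)^p.2.1| * |x^p.2.2| ≤ 1 * 1 * 1 := by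
            gcongr <;> assumption
          linarith
      _ = _ := by
          refine tsum_congr fun p => ?_
          congr 1
          calc ∫ r in (0:ℝ)..s, ((1-s)^p.1 * (s-r)^p.2.1 * r^p.2.2 : ℝ)
              = ∫ r in (0:ℝ)..s, (1-s)^p.1 * (r^p.2.2 * (s-r)^p.2.1) :=
                intervalIntegral.integral_congr fun r _ => by ring
            _ = (1-s)^p.1 * ∫ r in (0:ℝ)..s, r^p.2.2 * (s-r)^p.2.1 :=
                intervalIntegral.integral_const_mul _ _
            _ = (1-s)^p.1 * (s^(p.2.2 + p.2.1 + 1) *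
                ((Nat.factorial p.2.2 * Nat.factorial p.2.1 : ℝ) /
                  Nat.factorial (p.2.2 + p.2.1 + 1))) := by rw [beta_scaled]
  rw [intervalIntegral.integral_congr hmain]
  rw [swap_tsum_integral _ hM
    (fun p s => ((1-s)^p.1 * (s^(p.2.2 + p.2.1 + 1) *
      ((Nat.factorial p.2.2 * Nat.factorial p.2.1 : ℝ) / Nat.factorial (p.2.2 + p.2.1 + 1)))))
    (fun p => by fun_prop) 0 1 ?bound]
  case bound =>
    intro p x hx
    rw [Set.uIcc_of_le zero_le_one] at hx
    obtain ⟨hx0, hx1⟩ := hx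
    have b1 : |1 - x| ≤ 1 := abs_le.2 ⟨by linarith, by linarith⟩
    have b3 : |x| ≤ 1 := abs_le.2 ⟨by linarith, by linarith⟩
    have h1 := habs1 _ b1 p.1
    have h2 := habs1 _ b3 (p.2.2 + p.2.1 + 1)
    have hC : (Nat.factorial p.2.2 * Nat.factorial p.2.1 : ℝ) /
        Nat.factorial (p.2.2 + p.2.1 + 1) ≤ 1 := by
      rw [div_le_one (by positivity)]
      have hdvd := Nat.factorial_mul_factorial_dvd_factorial_add p.2.2 p.2.1
      have hle1 : Nat.factorial p.2.2 * Nat.factorial p.2.1 ≤ Nat.factorial (p.2.2 + p.2.1) :=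
        Nat.le_of_dvd (Nat.factorial_pos _) hdvd
      have hle2 : Nat.factorial (p.2.2 + p.2.1) ≤ Nat.factorial (p.2.2 + p.2.1 + 1) :=
        Nat.factorial_le (Nat.le_succ _)
      exact_mod_cast hle1.trans hle2
    have hC0 : (0:ℝ) ≤ (Nat.factorial p.2.2 * Nat.factorial p.2.1 : ℝ) /
        Nat.factorial (p.2.2 + p.2.1 + 1) := by positivity
    rw [abs_mul, abs_mul]
    rw [abs_of_nonneg hC0]
    have hb : |(1-x)^p.1| * (|x^(p.2.2 + p.2.1 + 1)| *
        ((Nat.factorial p.2.2 * Nat.factorial p.2.1 : ℝ) / Nat.factorial (p.2.2 + p.2.1 + 1)))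
        ≤ 1 * (1 * 1) := by
      gcongr <;> assumption
    linarith
  refine tsum_congr fun p => ?_
  obtain ⟨k, j, l⟩ := p
  have heval : ∫ x in (0:ℝ)..1, ((1-x)^k * (x^(l + j + 1) *
      ((Nat.factorial l * Nat.factorial j : ℝ) / Nat.factorial (l + j + 1))))
      = ((Nat.factorial l * Nat.factorial j : ℝ) / Nat.factorial (l + j + 1)) *
        ((Nat.factorial (l + j + 1) * Nat.factorial k : ℝ) / Nat.factorial ((l + j + 1) + k + 1)) := by
    calc ∫ x in (0:ℝ)..1, ((1-x)^k * (x^(l + j + 1) *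
          ((Nat.factorial l * Nat.factorial j : ℝ) / Nat.factorial (l + j + 1))))
        = ∫ x in (0:ℝ)..1, ((Nat.factorial l * Nat.factorial j : ℝ) / Nat.factorial (l + j + 1)) *
            (x^(l + j + 1) * (1-x)^k) :=
          intervalIntegral.integral_congr fun x _ => by ring
      _ = ((Nat.factorial l * Nat.factorial j : ℝ) / Nat.factorial (l + j + 1)) *
            ∫ x in (0:ℝ)..1, x^(l + j + 1) * (1-x)^k :=
          intervalIntegral.integral_const_mul _ _
      _ = _ := by rw [beta_nat k (l + j + 1)]
  rw [heval, ← Complex.coe_smul, smul_smul]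
  congr 1
  rw [show (l + j + 1) + k + 1 = k + j + l + 2 from by omega]
  have hk : (Nat.factorial k : ℂ) ≠ 0 := Nat.cast_ne_zero.2 k.factorial_ne_zero
  have hj : (Nat.factorial j : ℂ) ≠ 0 := Nat.cast_ne_zero.2 j.factorial_ne_zero
  have hl : (Nat.factorial l : ℂ) ≠ 0 := Nat.cast_ne_zero.2 l.factorial_ne_zero
  have hlj : (Nat.factorial (l + j + 1) : ℂ) ≠ 0 := Nat.cast_ne_zero.2 (l+j+1).factorial_ne_zero
  have hall : (Nat.factorial (k + j + l + 2) : ℂ) ≠ 0 := Nat.cast_ne_zero.2 (k+j+l+2).factorial_ne_zero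
  push_cast
  field_simp
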